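/- arXiv:cs/0602048 — 9 statements merged into one kernel-verified Lean document; each statement's English description precedes it below -/
import Mathlib

section
/- Let 0 < r < 1 and 0 ≤ f ≤ 1. Then the infimum of v₁ + v₂ + v_r over all (v₁, v₂, v_r) ∈ ℝ³ with v₁, v₂, v_r ≥ 0 satisfying f·(1−v₁)⁺ + (1−f)·(1−min{v₁, v_r})⁺ ≤ r/2 equals: 2−r if 0 ≤ f < 1/2; 2 − r/(2(1−f)) if 1/2 ≤ f < 1−r/2; and (2−r)/(2f) if 1−r/2 ≤ f ≤ 1. (This is the computation of λ_{1}(f) in equation (26) of the paper, arising from the single-user outage event O_{1}⁺ of the DDF protocol in the multiple access relay channel.) -/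
set_option maxHeartbeats 1600000 in
/-- Computation of λ_{1}(f) (equation (26)): the infimum of v₁+v₂+v_r over the
single-user outage region O_{1}⁺ of the DDF protocol in the MAR channel. -/
theorem lambda_one_inf (r f : ℝ) (hr0 : 0 < r) (hr1 : r < 1)
    (hf0 : 0 ≤ f) (hf1 : f ≤ 1) :
    sInf {s : ℝ | ∃ v₁ v₂ vr : ℝ, 0 ≤ v₁ ∧ 0 ≤ v₂ ∧ 0 ≤ vr ∧
        f * max (1 - v₁) 0 + (1 - f) * max (1 - min v₁ vr) 0 ≤ r / 2 ∧
        s = v₁ + v₂ + vr} =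
      (if f < 1 / 2 then 2 - r
       else if f < 1 - r / 2 then 2 - r / (2 * (1 - f))
       else (2 - r) / (2 * f)) := by
  set S : Set ℝ := {s : ℝ | ∃ v₁ v₂ vr : ℝ, 0 ≤ v₁ ∧ 0 ≤ v₂ ∧ 0 ≤ vr ∧
        f * max (1 - v₁) 0 + (1 - f) * max (1 - min v₁ vr) 0 ≤ r / 2 ∧
        s = v₁ + v₂ + vr} with hS
  split_ifs with h1 h2
  · -- f < 1/2, answer 2 - r
    have hmem : (2 - r) ∈ S := by
      refine ⟨1 - r/2, 0, 1 - r/2, by linarith, le_refl 0, by linarith, ?_, by ring⟩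
      have h' : min (1 - r/2) (1 - r/2) = 1 - r/2 := min_self _
      rw [h']
      have h'' : max (1 - (1 - r/2)) 0 = r/2 := by
        rw [max_eq_left]; ring; linarith
      rw [h'']; nlinarith
    have hlb : ∀ s ∈ S, (2 - r) ≤ s := by
      rintro s ⟨v₁, v₂, vr, hv₁, hv₂, hvr, hc, rfl⟩
      have hm1 : min v₁ vr ≤ v₁ := min_le_left _ _
      have hm2 : min v₁ vr ≤ vr := min_le_right _ _
      have hm0 : 0 ≤ min v₁ vr := le_min hv₁ hvr
      have hM1 : 1 - v₁ ≤ max (1 - v₁) 0 := le_max_left _ _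
      have hM1' : 0 ≤ max (1 - v₁) 0 := le_max_right _ _
      have hM2 : 1 - min v₁ vr ≤ max (1 - min v₁ vr) 0 := le_max_left _ _
      have hM2' : 0 ≤ max (1 - min v₁ vr) 0 := le_max_right _ _
      rcases le_or_gt 1 v₁ with hc1 | hc1
      · -- v₁ ≥ 1
        have hq : max (1 - v₁) 0 = 0 := by rw [max_eq_right]; linarith
        rw [hq] at hc
        -- (1-f)*(max (1 - min) 0) ≤ r/2, and max ≥ 1 - vr
        nlinarith [mul_le_mul_of_nonneg_left hM2 (by linarith : (0:ℝ) ≤ 1 - f)]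
      · -- v₁ < 1
        nlinarith [mul_nonneg (by linarith : (0:ℝ) ≤ 1 - 2*f)
            (by linarith : (0:ℝ) ≤ v₁ - min v₁ vr),
          mul_le_mul_of_nonneg_left hM1 hf0,
          mul_le_mul_of_nonneg_left hM2 (by linarith : (0:ℝ) ≤ 1 - f)]
    exact le_antisymm (csInf_le ⟨2 - r, hlb⟩ hmem) (le_csInf ⟨2 - r, hmem⟩ hlb)
  · -- 1/2 ≤ f < 1 - r/2, answer 2 - r/(2(1-f))
    have hf2 : 1/2 ≤ f := not_lt.mp h1
    have hfr : f < 1 - r/2 := h2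
    have h1f : 0 < 1 - f := by linarith
    have h2f : 0 < 2 * (1 - f) := by linarith
    set L : ℝ := 2 - r / (2 * (1 - f)) with hL
    have hvrval : r / (2 * (1 - f)) < 1 := by
      rw [div_lt_one h2f]; linarith
    have hvrpos : 0 < r / (2 * (1 - f)) := div_pos hr0 h2f
    have hmem : L ∈ S := by
      refine ⟨1, 0, 1 - r / (2 * (1 - f)), by norm_num, le_refl 0, by linarith, ?_, by ring⟩
      have hmin : min 1 (1 - r / (2 * (1 - f))) = 1 - r / (2 * (1 - f)) := by
        rw [min_eq_right]; linarith
      rw [hmin]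
      have hq1 : max (1 - (1:ℝ)) 0 = 0 := by norm_num
      have hq2 : max (1 - (1 - r / (2 * (1 - f)))) 0 = r / (2 * (1 - f)) := by
        rw [max_eq_left] <;> [ring; linarith]
      rw [hq1, hq2]
      have : (1 - f) * (r / (2 * (1 - f))) = r / 2 := by
        field_simp
      rw [this]; linarith
    have hlb : ∀ s ∈ S, L ≤ s := by
      rintro s ⟨v₁, v₂, vr, hv₁, hv₂, hvr, hc, rfl⟩
      have hm1 : min v₁ vr ≤ v₁ := min_le_left _ _
      have hm2 : min v₁ vr ≤ vr := min_le_right _ _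
      have hm0 : 0 ≤ min v₁ vr := le_min hv₁ hvr
      have hM1 : 1 - v₁ ≤ max (1 - v₁) 0 := le_max_left _ _
      have hM1' : 0 ≤ max (1 - v₁) 0 := le_max_right _ _
      have hM2 : 1 - min v₁ vr ≤ max (1 - min v₁ vr) 0 := le_max_left _ _
      have hM2' : 0 ≤ max (1 - min v₁ vr) 0 := le_max_right _ _
      have key : (2 - (v₁ + v₂ + vr)) * (2 * (1 - f)) ≤ r := by
        rcases le_or_gt 1 v₁ with hc1 | hc1
        · have hq : max (1 - v₁) 0 = 0 := by rw [max_eq_right]; linarith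
          rw [hq] at hc
          nlinarith [mul_le_mul_of_nonneg_left hM2 (by linarith : (0:ℝ) ≤ 1 - f)]
        · nlinarith [mul_nonneg (by linarith : (0:ℝ) ≤ 2*f - 1)
              (by linarith : (0:ℝ) ≤ 1 - v₁),
            mul_le_mul_of_nonneg_left hM1 hf0,
            mul_le_mul_of_nonneg_left hM2 (by linarith : (0:ℝ) ≤ 1 - f)]
      have := (le_div_iff₀ h2f).mpr key
      rw [hL]; linarith
    exact le_antisymm (csInf_le ⟨L, hlb⟩ hmem) (le_csInf ⟨L, hmem⟩ hlb)
  · -- f ≥ 1 - r/2, answer (2-r)/(2f)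
    have hf2 : 1 - r/2 ≤ f := not_lt.mp h2
    have hfpos : 0 < f := by linarith
    have h2fpos : 0 < 2 * f := by linarith
    set L : ℝ := (2 - r) / (2 * f) with hL
    have hL1 : L ≤ 1 := by
      rw [hL, div_le_one h2fpos]; linarith
    have hL0 : 0 ≤ L := div_nonneg (by linarith) (by linarith)
    have hmem : L ∈ S := by
      refine ⟨L, 0, 0, hL0, le_refl 0, le_refl 0, ?_, by ring⟩
      have hmin : min L 0 = 0 := min_eq_right hL0
      rw [hmin]
      have hq1 : max (1 - L) 0 = 1 - L := max_eq_left (by linarith)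
      have hq2 : max (1 - (0:ℝ)) 0 = 1 := by norm_num
      rw [hq1, hq2]
      have hfL : f * L = (2 - r) / 2 := by
        rw [hL]; field_simp
      nlinarith
    have hlb : ∀ s ∈ S, L ≤ s := by
      rintro s ⟨v₁, v₂, vr, hv₁, hv₂, hvr, hc, rfl⟩
      have hm1 : min v₁ vr ≤ v₁ := min_le_left _ _
      have hm2 : min v₁ vr ≤ vr := min_le_right _ _
      have hm0 : 0 ≤ min v₁ vr := le_min hv₁ hvr
      have hM1 : 1 - v₁ ≤ max (1 - v₁) 0 := le_max_left _ _
      have hM1' : 0 ≤ max (1 - v₁) 0 := le_max_right _ _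
      have hM2 : 1 - min v₁ vr ≤ max (1 - min v₁ vr) 0 := le_max_left _ _
      have hM2' : 0 ≤ max (1 - min v₁ vr) 0 := le_max_right _ _
      rcases le_or_gt 1 v₁ with hc1 | hc1
      · linarith
      · have hM1eq : max (1 - v₁) 0 = 1 - v₁ := max_eq_left (by linarith)
        rw [hM1eq] at hc
        have t1 : f * (1 - v₁) + (1 - f) * (1 - min v₁ vr) ≤ r / 2 := by
          have := mul_le_mul_of_nonneg_left hM2 (by linarith : (0:ℝ) ≤ 1 - f)
          linarith
        have t2 : (1 - f) * (min v₁ vr) ≤ f * vr := by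
          nlinarith [mul_nonneg hfpos.le (by linarith : (0:ℝ) ≤ vr - min v₁ vr),
            mul_nonneg (by linarith : (0:ℝ) ≤ 2*f - 1) hm0]
        have key : 2 - r ≤ (v₁ + v₂ + vr) * (2 * f) := by
          nlinarith [mul_nonneg hfpos.le hv₂]
        rw [hL]
        exact (div_le_iff₀ h2fpos).mpr key
    exact le_antisymm (csInf_le ⟨L, hlb⟩ hmem) (le_csInf ⟨L, hmem⟩ hlb)
end

section
/- Let 0 < r ≤ 1 and 0 ≤ f ≤ 1, and consider the infimum of v₁ + v₂ + v_r over all (v₁, v₂, v_r) ∈ ℝ³ with v₁, v₂, v_r ≥ 0 satisfying f·(1−min{v₁, v₂})⁺ + (1−f)·(1−min{v₁, v₂, v_r})⁺ ≤ r. If 0 < r < 1/3, this infimum equals 3(1−r) if 0 ≤ f < 2/3, equals 3 − r/(1−f) if 2/3 ≤ f < 1−r, and equals 2(1−r)/f if 1−r ≤ f ≤ 1. If 1/3 ≤ r ≤ 1, it equals 3(1−r) if 0 ≤ f < 2/3 and equals 2(1−r)/f if 2/3 ≤ f ≤ 1. (This is the computation of λ_{1,2}(f) in equations (133) and (27) of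 the paper, arising from the joint outage event O_{1,2}⁺ of the DDF protocol in the multiple access relay channel.) -/
lemma maxsub_eq (x : ℝ) : max (1 - x) 0 = 1 - min x 1 := by
  rcases le_total x 1 with h | h
  · rw [min_eq_left h, max_eq_left (by linarith)]
  · rw [min_eq_right h, max_eq_right (by linarith)]
    ring

/-- Computation of λ_{1,2}(f) (equations (133) and (27)): the infimum of
v₁+v₂+v_r over the joint outage region O_{1,2}⁺ of the DDF protocol in the
MAR channel. -/
theorem lambda_one_two_inf (r f : ℝ) (hr0 : 0 < r) (hr1 : r ≤ 1)
    (hf0 : 0 ≤ f) (hf1 : f ≤ 1) :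
    sInf {s : ℝ | ∃ v₁ v₂ vr : ℝ, 0 ≤ v₁ ∧ 0 ≤ v₂ ∧ 0 ≤ vr ∧
        f * max (1 - min v₁ v₂) 0 + (1 - f) * max (1 - min v₁ (min v₂ vr)) 0 ≤ r ∧
        s = v₁ + v₂ + vr} =
      (if r < 1 / 3 then
        (if f < 2 / 3 then 3 * (1 - r)
         else if f < 1 - r then 3 - r / (1 - f)
         else 2 * (1 - r) / f)
       else
        (if f < 2 / 3 then 3 * (1 - r)
         else 2 * (1 - r) / f)) := by
  set S : Set ℝ := {s : ℝ | ∃ v₁ v₂ vr : ℝ, 0 ≤ v₁ ∧ 0 ≤ v₂ ∧ 0 ≤ vr ∧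
        f * max (1 - min v₁ v₂) 0 + (1 - f) * max (1 - min v₁ (min v₂ vr)) 0 ≤ r ∧
        s = v₁ + v₂ + vr} with hS
  -- witness 1 : (1-r,1-r,1-r), value 3(1-r)
  have W1 : (3 * (1 - r)) ∈ S := by
    refine ⟨1 - r, 1 - r, 1 - r, by linarith, by linarith, by linarith, ?_, by ring⟩
    rw [min_self, min_self]
    rw [show (1:ℝ) - (1 - r) = r by ring, max_eq_left hr0.le]
    nlinarith
  -- witness 2 : ((1-r)/f, (1-r)/f, 0), value 2(1-r)/f, when 1-r ≤ f and 2/3 ≤ f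
  have W2 : 2/3 ≤ f → 1 - r ≤ f → (2 * (1 - r) / f) ∈ S := by
    intro hf23 hfr
    have hf : 0 < f := by linarith
    have ha0 : 0 ≤ (1 - r) / f := div_nonneg (by linarith) hf.le
    have ha1 : (1 - r) / f ≤ 1 := (div_le_one hf).mpr hfr
    refine ⟨(1 - r)/f, (1 - r)/f, 0, ha0, ha0, le_refl 0, ?_, by ring⟩
    rw [min_self, min_eq_right ha0, min_eq_right ha0]
    rw [max_eq_left (by linarith : (0:ℝ) ≤ 1 - (1 - r)/f)]
    rw [show (1:ℝ) - 0 = 1 by ring, max_eq_left (by norm_num : (0:ℝ) ≤ 1)]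
    have hfa : f * ((1 - r) / f) = 1 - r := by field_simp
    nlinarith [hfa]
  -- witness 3 : (1, 1, 1 - r/(1-f)), value 3 - r/(1-f), when f < 1 - r
  have W3 : f < 1 - r → (3 - r / (1 - f)) ∈ S := by
    intro hfr
    have h1f : 0 < 1 - f := by linarith
    have hv0 : 0 ≤ 1 - r / (1 - f) := by
      have : r / (1 - f) ≤ 1 := (div_le_one h1f).mpr (by linarith)
      linarith
    have hv1 : 1 - r / (1 - f) ≤ 1 := by
      have : 0 ≤ r / (1 - f) := div_nonneg hr0.le h1f.le
      linarith
    refine ⟨1, 1, 1 - r / (1 - f), by norm_num, by norm_num, hv0, ?_, by ring⟩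
    rw [min_self, min_eq_right hv1, min_eq_right hv1]
    rw [show (1:ℝ) - 1 = 0 by ring, max_eq_right (le_refl 0)]
    rw [show (1:ℝ) - (1 - r / (1 - f)) = r / (1 - f) by ring,
      max_eq_left (div_nonneg hr0.le h1f.le)]
    have hfa : (1 - f) * (r / (1 - f)) = r := by field_simp
    nlinarith [hfa]
  -- lower bound
  have LB : ∀ s ∈ S, (if r < 1 / 3 then
        (if f < 2 / 3 then 3 * (1 - r)
         else if f < 1 - r then 3 - r / (1 - f)
         else 2 * (1 - r) / f)
       else
        (if f < 2 / 3 then 3 * (1 - r)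
         else 2 * (1 - r) / f)) ≤ s := by
    rintro s ⟨v₁, v₂, vr, h1, h2, h3, hc, hs⟩
    set A : ℝ := min (min v₁ v₂) 1 with hA
    set B : ℝ := min (min v₁ (min v₂ vr)) 1 with hB
    have hB0 : 0 ≤ B := le_min (le_min h1 (le_min h2 h3)) (by norm_num)
    have hBA : B ≤ A := min_le_min (min_le_min le_rfl (min_le_left _ _)) le_rfl
    have hA1 : A ≤ 1 := min_le_right _ _
    have hcon : 1 - r ≤ f * A + (1 - f) * B := by
      rw [maxsub_eq, maxsub_eq] at hc
      rw [hA, hB]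
      nlinarith [hc]
    have hsum : 2 * A + B ≤ s := by
      have hAv1 : A ≤ v₁ := le_trans (min_le_left _ _) (min_le_left _ _)
      have hAv2 : A ≤ v₂ := le_trans (min_le_left _ _) (min_le_right _ _)
      have hBvr : B ≤ vr :=
        le_trans (min_le_left _ _) (le_trans (min_le_right _ _) (min_le_right _ _))
      rw [hs]; linarith
    split_ifs with h1' h2' h3' h4'
    · -- 3(1-r), f < 2/3
      nlinarith [mul_nonneg (by linarith : (0:ℝ) ≤ 2 - 3*f) (by linarith : (0:ℝ) ≤ A - B)]
    · -- 3 - r/(1-f)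
      have h1f : 0 < 1 - f := by linarith
      have key : 3 - (2*A + B) ≤ r / (1 - f) := by
        rw [le_div_iff₀ h1f]
        nlinarith [mul_nonneg (by linarith : (0:ℝ) ≤ 3*f - 2) (by linarith : (0:ℝ) ≤ 1 - A)]
      linarith
    · -- 2(1-r)/f, f ≥ 2/3 (so f > 0)
      have hf : 0 < f := by linarith
      rw [div_le_iff₀ hf]
      nlinarith [mul_nonneg hB0 (by linarith : (0:ℝ) ≤ 3*f - 2)]
    · -- r ≥ 1/3, f < 2/3
      nlinarith [mul_nonneg (by linarith : (0:ℝ) ≤ 2 - 3*f) (by linarith : (0:ℝ) ≤ A - B)]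
    · -- r ≥ 1/3, f ≥ 2/3
      have hf : 0 < f := by linarith
      rw [div_le_iff₀ hf]
      nlinarith [mul_nonneg hB0 (by linarith : (0:ℝ) ≤ 3*f - 2)]
  refine IsLeast.csInf_eq ⟨?_, LB⟩
  split_ifs with h1' h2' h3' h4'
  · exact W1
  · exact W3 h3'
  · exact W2 (by linarith) (by linarith)
  · exact W1
  · exact W2 (by linarith) (by linarith)
end

section
/- Let 0 < r and r ≤ f < 1. Then the infimum of u₁ + u₂ over all pairs (u₁, u₂) with 0 ≤ u₁, u₂ < 1 satisfying f = max{ r/(2(1−max{u₁,u₂})), r/(1−min{u₁,u₂}) } equals 2(1−r/f) if r ≤ f < 3r/2, and equals 1 − r/(2f) if f ≥ 3r/2. (This is the computation of λ(f) in equation (28) of the paper, arising from the relation (25) between the relay's listening fraction f and the exponential orders u₁, u₂ of the inverse squared source-to-relay channel gains.) -/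
/-- Computation of λ(f) (equation (28)): the infimum of u₁+u₂ over exponential
orders of the source-to-relay channels compatible with relay listening
fraction f via relation (25). -/
theorem lambda_relay_inf (r f : ℝ) (hr : 0 < r) (hfr : r ≤ f) (hf1 : f < 1) :
    sInf {s : ℝ | ∃ u₁ u₂ : ℝ, 0 ≤ u₁ ∧ u₁ < 1 ∧ 0 ≤ u₂ ∧ u₂ < 1 ∧
        f = max (r / (2 * (1 - max u₁ u₂))) (r / (1 - min u₁ u₂)) ∧
        s = u₁ + u₂} =
      (if f < 3 * r / 2 then 2 * (1 - r / f) else 1 - r / (2 * f)) := by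
  have hf0 : 0 < f := hr.trans_le hfr
  set v : ℝ := if f < 3 * r / 2 then 2 * (1 - r / f) else 1 - r / (2 * f) with hv
  have hmem : v ∈ {s : ℝ | ∃ u₁ u₂ : ℝ, 0 ≤ u₁ ∧ u₁ < 1 ∧ 0 ≤ u₂ ∧ u₂ < 1 ∧
      f = max (r / (2 * (1 - max u₁ u₂))) (r / (1 - min u₁ u₂)) ∧
      s = u₁ + u₂} := by
    by_cases hc : f < 3 * r / 2
    · refine ⟨1 - r / f, 1 - r / f, ?_, ?_, ?_, ?_, ?_, ?_⟩
      · have : r / f ≤ 1 := (div_le_one hf0).2 hfr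
        linarith
      · have : 0 < r / f := div_pos hr hf0
        linarith
      · have : r / f ≤ 1 := (div_le_one hf0).2 hfr
        linarith
      · have : 0 < r / f := div_pos hr hf0
        linarith
      · rw [max_self, min_self]
        have h1 : 1 - (1 - r / f) = r / f := by ring
        rw [h1]
        have h2 : r / (r / f) = f := by field_simp
        have h3 : r / (2 * (r / f)) = f / 2 := by
          field_simp
        rw [h2, h3, max_eq_right (by linarith)]
      · simp only [hv, if_pos hc]
        ring
    · refine ⟨1 - r / (2 * f), 0, ?_, ?_, le_refl 0, by norm_num, ?_, ?_⟩
      · have : r / (2 * f) ≤ 1 := by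
          rw [div_le_one (by linarith)]
          linarith
        linarith
      · have : 0 < r / (2 * f) := div_pos hr (by linarith)
        linarith
      · have hu0 : (0 : ℝ) ≤ 1 - r / (2 * f) := by
          have : r / (2 * f) ≤ 1 := by
            rw [div_le_one (by linarith)]
            linarith
          linarith
        rw [max_eq_left hu0, min_eq_right hu0]
        have h1 : 1 - (1 - r / (2 * f)) = r / (2 * f) := by ring
        rw [h1]
        have h2 : r / (2 * (r / (2 * f))) = f := by field_simp
        rw [h2]
        simp only [sub_zero, div_one]
        exact (max_eq_left hfr).symm
      · simp only [hv, if_neg hc]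
        ring
  have hlb : ∀ b ∈ {s : ℝ | ∃ u₁ u₂ : ℝ, 0 ≤ u₁ ∧ u₁ < 1 ∧ 0 ≤ u₂ ∧ u₂ < 1 ∧
      f = max (r / (2 * (1 - max u₁ u₂))) (r / (1 - min u₁ u₂)) ∧
      s = u₁ + u₂}, v ≤ b := by
    rintro b ⟨u₁, u₂, h10, h11, h20, h21, heq, rfl⟩
    set M := max u₁ u₂ with hM
    set m := min u₁ u₂ with hm
    have hM1 : M < 1 := max_lt h11 h21
    have hm0 : 0 ≤ m := le_min h10 h20
    have hmM : m ≤ M := min_le_max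
    have hsum : u₁ + u₂ = m + M := (min_add_max u₁ u₂).symm
    rw [hsum]
    have hMd : (0 : ℝ) < 1 - M := by linarith
    have hmd : (0 : ℝ) < 1 - m := by linarith [lt_of_le_of_lt hmM hM1]
    have ha : r / f * f = r := div_mul_cancel₀ r hf0.ne'
    have hb : r / (2 * f) * (2 * f) = r := div_mul_cancel₀ r (by positivity : (2 * f) ≠ 0)
    rcases max_choice (r / (2 * (1 - M))) (r / (1 - m)) with hcase | hcase
    · -- f = r / (2(1-M))
      have hfeq : f * (2 * (1 - M)) = r := by
        have hfe : f = r / (2 * (1 - M)) := by rw [heq, hcase]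
        rw [hfe]
        field_simp
      by_cases hc : f < 3 * r / 2
      · simp only [hv, if_pos hc]
        nlinarith [mul_pos hf0 hf0]
      · simp only [hv, if_neg hc]
        push_neg at hc
        nlinarith [mul_pos hf0 hf0]
    · -- f = r / (1 - m)
      have hfeq : f * (1 - m) = r := by
        have hfe : f = r / (1 - m) := by rw [heq, hcase]
        rw [hfe]
        field_simp
      by_cases hc : f < 3 * r / 2
      · simp only [hv, if_pos hc]
        nlinarith [mul_pos hf0 hf0]
      · simp only [hv, if_neg hc]
        push_neg at hc
        nlinarith [mul_pos hf0 hf0]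
  exact le_antisymm (csInf_le ⟨v, hlb⟩ hmem) (le_csInf ⟨v, hmem⟩ hlb)
end

section
/- Let 0 < r ≤ 1. Define λ(f) = min{2(1−r/f), 1 − r/(2f)} for f > 0, and define λ_{1}(f) = 2−r for 0 ≤ f < 1/2, λ_{1}(f) = 2 − r/(2(1−f)) for 1/2 ≤ f < 1−r/2, and λ_{1}(f) = (2−r)/(2f) for 1−r/2 ≤ f ≤ 1. Then the infimum of λ(f) + λ_{1}(f) over f ∈ [r, 1] equals: 2−r if 0 < r ≤ 1/2; (4−5r)/(2(1−r)) if 1/2 ≤ r ≤ 2/3; and (2−r)/(2r) if 2/3 ≤ r ≤ 1. (This is the computation of the single-user error exponent d_{1}(r) in equation (29) of the paper for the DDF protocol in the multiple access relay channel.) -/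
section helpers

private lemma L3 (r f : ℝ) (h1 : 0 < r) (h2 : r ≤ f) (h3 : f ≤ 1) (h4 : 1/2 ≤ f)
    (h5 : f < 1 - r/2) (h6 : r ≤ 1/2) :
    2 - r ≤ 2*(1 - r/f) + (2 - r/(2*(1-f))) := by
  have hf : 0 < f := lt_of_lt_of_le h1 h2
  have h1f : 0 < 1 - f := by linarith
  rw [← sub_nonneg]
  have key : 2*(1 - r/f) + (2 - r/(2*(1-f))) - (2 - r) =
      ((2+r)*2*f*(1-f) - (4*r*(1-f) + r*f)) / (2*f*(1-f)) := by
    field_simp; ring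
  rw [key]
  apply div_nonneg _ (by positivity)
  nlinarith [mul_pos hf h1f, sq_nonneg (f - 1/2), sq_nonneg (r - f),
    mul_nonneg (sub_nonneg.2 h2) h1f.le]

private lemma L4 (r f : ℝ) (h1 : 0 < r) (h2 : r ≤ f) (h3 : f ≤ 1) (h4 : 1/2 ≤ f)
    (h5 : f < 1 - r/2) : 2 - r ≤ 1 - r/(2*f) + (2 - r/(2*(1-f))) := by
  have hf : 0 < f := lt_of_lt_of_le h1 h2
  have h1f : 0 < 1 - f := by linarith
  rw [← sub_nonneg]
  have key : 1 - r/(2*f) + (2 - r/(2*(1-f))) - (2 - r) =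
      ((1+r)*2*f*(1-f) - r) / (2*f*(1-f)) := by
    field_simp; ring
  rw [key]
  apply div_nonneg _ (by positivity)
  nlinarith [mul_pos hf h1f, sq_nonneg (f - 1/2), mul_nonneg h1.le (sub_nonneg.2 h3)]

private lemma L5 (r f : ℝ) (h1 : 0 < r) (h2 : r ≤ f) (h5 : 1 - r/2 ≤ f) (h6 : r ≤ 1/2) :
    2 - r ≤ 2*(1 - r/f) + (2-r)/(2*f) := by
  have hf : 0 < f := lt_of_lt_of_le h1 h2
  rw [← sub_nonneg]
  have key : 2*(1 - r/f) + (2-r)/(2*f) - (2 - r) = (2*r*f + 2 - 5*r) / (2*f) := by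
    field_simp; ring
  rw [key]
  apply div_nonneg _ (by positivity)
  nlinarith

private lemma L6 (r f : ℝ) (h1 : 0 < r) (h2 : r ≤ f) (h3 : f ≤ 1) (h6 : r ≤ 1) :
    2 - r ≤ 1 - r/(2*f) + (2-r)/(2*f) := by
  have hf : 0 < f := lt_of_lt_of_le h1 h2
  rw [← sub_nonneg]
  have key : 1 - r/(2*f) + (2-r)/(2*f) - (2 - r) = ((1-r)*(1-f)) / f := by
    field_simp; ring
  rw [key]
  apply div_nonneg (by nlinarith) (by positivity)

private lemma L7 (r f : ℝ) (h1 : 0 < r) (h2 : r ≤ f) (h4 : 1/2 ≤ f) (h5 : f < 1 - r/2)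
    (h6 : 1/2 < r) (h7 : r ≤ 2/3) :
    (4-5*r)/(2*(1-r)) ≤ 2*(1 - r/f) + (2 - r/(2*(1-f))) := by
  have hf : 0 < f := lt_of_lt_of_le h1 h2
  have h1f : 0 < 1 - f := by linarith
  have h1r : 0 < 1 - r := by linarith
  rw [← sub_nonneg]
  have key : 2*(1 - r/f) + (2 - r/(2*(1-f))) - (4-5*r)/(2*(1-r)) =
      (16*f*(1-f)*(1-r) - 8*r*(1-f)*(1-r) - 2*r*f*(1-r) - (4-5*r)*2*f*(1-f)) /
        (4*f*(1-f)*(1-r)) := by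
    field_simp; ring
  rw [key]
  apply div_nonneg _ (by positivity)
  nlinarith [mul_pos hf h1f, mul_pos h1f h1r, sq_nonneg (f - 1/2), sq_nonneg (r - 1/2),
    mul_nonneg (sub_nonneg.2 h2) h1f.le, mul_nonneg (sub_nonneg.2 h2) h1r.le,
    mul_nonneg (sub_nonneg.2 h4) h1r.le]

private lemma L8 (r f : ℝ) (h1 : 0 < r) (h2 : r ≤ f) (h4 : 1/2 ≤ f) (h5 : f < 1 - r/2)
    (h6 : 1/2 < r) (h7 : r ≤ 2/3) :
    (4-5*r)/(2*(1-r)) ≤ 1 - r/(2*f) + (2 - r/(2*(1-f))) := by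
  have hf : 0 < f := lt_of_lt_of_le h1 h2
  have h1f : 0 < 1 - f := by linarith
  have h1r : 0 < 1 - r := by linarith
  rw [← sub_nonneg]
  have key : 1 - r/(2*f) + (2 - r/(2*(1-f))) - (4-5*r)/(2*(1-r)) =
      (12*f*(1-f)*(1-r) - 2*r*(1-f)*(1-r) - 2*r*f*(1-r) - (4-5*r)*2*f*(1-f)) /
        (4*f*(1-f)*(1-r)) := by
    field_simp; ring
  rw [key]
  apply div_nonneg _ (by positivity)
  nlinarith [mul_pos hf h1f, mul_pos h1f h1r, sq_nonneg (f - 1/2), sq_nonneg (r - 1/2),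
    mul_nonneg (sub_nonneg.2 h2) h1f.le, mul_nonneg (sub_nonneg.2 h2) h1r.le,
    mul_nonneg (sub_nonneg.2 h4) h1r.le]

private lemma L9 (r f : ℝ) (h1 : 0 < r) (h2 : r ≤ f) (h5 : 1 - r/2 ≤ f)
    (h6 : 1/2 < r) (h7 : r ≤ 2/3) :
    (4-5*r)/(2*(1-r)) ≤ 2*(1 - r/f) + (2-r)/(2*f) := by
  have hf : 0 < f := lt_of_lt_of_le h1 h2
  have h1r : 0 < 1 - r := by linarith
  rw [← sub_nonneg]
  have key : 2*(1 - r/f) + (2-r)/(2*f) - (4-5*r)/(2*(1-r)) =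
      (8*f*(1-r) - 8*r*(1-r) + 2*(2-r)*(1-r) - (4-5*r)*2*f) / (4*f*(1-r)) := by
    field_simp; ring
  rw [key]
  apply div_nonneg _ (by positivity)
  nlinarith [mul_nonneg (sub_nonneg.2 h2) h1r.le, sq_nonneg (r - 2/3),
    mul_nonneg (sub_nonneg.2 h5) h1r.le]

private lemma L10 (r f : ℝ) (h1 : 0 < r) (h2 : r ≤ f) (h3 : f ≤ 1)
    (h6 : 1/2 < r) (h7 : r ≤ 2/3) :
    (4-5*r)/(2*(1-r)) ≤ 1 - r/(2*f) + (2-r)/(2*f) := by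
  have hf : 0 < f := lt_of_lt_of_le h1 h2
  have h1r : 0 < 1 - r := by linarith
  rw [← sub_nonneg]
  have key : 1 - r/(2*f) + (2-r)/(2*f) - (4-5*r)/(2*(1-r)) =
      (4*f*(1-r) - 2*r*(1-r) + 2*(2-r)*(1-r) - (4-5*r)*2*f) / (4*f*(1-r)) := by
    field_simp; ring
  rw [key]
  apply div_nonneg _ (by positivity)
  nlinarith [mul_nonneg (sub_nonneg.2 h2) h1r.le, sq_nonneg (r - 2/3),
    mul_nonneg (sub_nonneg.2 h3) h1r.le]

private lemma L11 (r f : ℝ) (h1 : 0 < r) (h2 : r ≤ f) (h3 : f ≤ 1) (h6 : 2/3 < r) :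
    (2-r)/(2*r) ≤ 2*(1 - r/f) + (2-r)/(2*f) := by
  have hf : 0 < f := lt_of_lt_of_le h1 h2
  rw [← sub_nonneg]
  have key : 2*(1 - r/f) + (2-r)/(2*f) - (2-r)/(2*r) =
      (4*r*f - 4*r^2 + r*(2-r) - f*(2-r)) / (2*r*f) := by
    field_simp; ring
  rw [key]
  apply div_nonneg _ (by positivity)
  nlinarith [mul_nonneg (sub_nonneg.2 h2) h1.le, sq_nonneg (r - 2/3),
    mul_nonneg (sub_nonneg.2 h2) (sub_nonneg.2 h3)]

private lemma L12 (r f : ℝ) (h1 : 0 < r) (h2 : r ≤ f) (h3 : f ≤ 1) (h6 : 2/3 < r) :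
    (2-r)/(2*r) ≤ 1 - r/(2*f) + (2-r)/(2*f) := by
  have hf : 0 < f := lt_of_lt_of_le h1 h2
  rw [← sub_nonneg]
  have key : 1 - r/(2*f) + (2-r)/(2*f) - (2-r)/(2*r) =
      (3*r*f - 2*r^2 + 2*r - 2*f) / (2*r*f) := by
    field_simp; ring
  rw [key]
  apply div_nonneg _ (by positivity)
  nlinarith [mul_nonneg (sub_nonneg.2 h2) h1.le, sq_nonneg (r - 2/3),
    mul_nonneg (sub_nonneg.2 h2) (sub_nonneg.2 h3)]

end helpers

/-- Computation of the single-user error exponent d_{1}(r) (equation (29)):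
the infimum over f ∈ [r,1] of λ(f) + λ_{1}(f) for the DDF protocol in the
MAR channel. -/
theorem d_one_inf (r : ℝ) (hr0 : 0 < r) (hr1 : r ≤ 1) :
    sInf {y : ℝ | ∃ f : ℝ, r ≤ f ∧ f ≤ 1 ∧
        y = min (2 * (1 - r / f)) (1 - r / (2 * f)) +
          (if f < 1 / 2 then 2 - r
           else if f < 1 - r / 2 then 2 - r / (2 * (1 - f))
           else (2 - r) / (2 * f))} =
      (if r ≤ 1 / 2 then 2 - r
       else if r ≤ 2 / 3 then (4 - 5 * r) / (2 * (1 - r))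
       else (2 - r) / (2 * r)) := by
  have hmem : (if r ≤ 1 / 2 then 2 - r
       else if r ≤ 2 / 3 then (4 - 5 * r) / (2 * (1 - r))
       else (2 - r) / (2 * r)) ∈ {y : ℝ | ∃ f : ℝ, r ≤ f ∧ f ≤ 1 ∧
        y = min (2 * (1 - r / f)) (1 - r / (2 * f)) +
          (if f < 1 / 2 then 2 - r
           else if f < 1 - r / 2 then 2 - r / (2 * (1 - f))
           else (2 - r) / (2 * f))} := by
    refine ⟨r, le_refl r, hr1, ?_⟩
    have hm : min (2 * (1 - r / r)) (1 - r / (2 * r)) = 0 := by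
      rw [div_self hr0.ne', show r / (2 * r) = 1/2 by
        rw [mul_comm, ← div_div, div_self hr0.ne']]
      norm_num
    rw [hm, zero_add]
    rcases lt_or_ge r (1/2) with h | h
    · rw [if_pos h, if_pos h.le]
    · rw [if_neg (not_lt.2 h)]
      rcases lt_or_ge r (1 - r/2) with h2 | h2
      · rw [if_pos h2]
        rcases eq_or_lt_of_le h with he | hlt
        · have : r = 1/2 := he.symm
          subst this; norm_num
        · rw [if_neg (not_le.2 hlt), if_pos (by linarith : r ≤ 2/3)]
          have h1r : (0:ℝ) < 1 - r := by linarith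
          field_simp
          ring
      · rw [if_neg (not_lt.2 h2)]
        rcases le_or_gt r (2/3) with h3 | h3
        · have : r = 2/3 := le_antisymm h3 (by linarith)
          subst this; norm_num
        · rw [if_neg (by linarith : ¬ r ≤ 1/2), if_neg (not_le.2 h3)]
  have hlb : ∀ y ∈ {y : ℝ | ∃ f : ℝ, r ≤ f ∧ f ≤ 1 ∧
        y = min (2 * (1 - r / f)) (1 - r / (2 * f)) +
          (if f < 1 / 2 then 2 - r
           else if f < 1 - r / 2 then 2 - r / (2 * (1 - f))
           else (2 - r) / (2 * f))},
      (if r ≤ 1 / 2 then 2 - r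
       else if r ≤ 2 / 3 then (4 - 5 * r) / (2 * (1 - r))
       else (2 - r) / (2 * r)) ≤ y := by
    rintro y ⟨f, hrf, hf1, rfl⟩
    have hf0 : 0 < f := lt_of_lt_of_le hr0 hrf
    rw [← min_add_add_right]
    refine le_min ?_ ?_
    · -- branch A : 2*(1 - r/f)
      rcases lt_or_ge f (1/2) with hfa | hfa
      · rw [if_pos hfa, if_pos (by linarith : r ≤ 1/2)]
        have : r / f ≤ 1 := (div_le_one hf0).2 hrf
        linarith
      · rw [if_neg (not_lt.2 hfa)]
        rcases lt_or_ge f (1 - r/2) with hfb | hfb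
        · rw [if_pos hfb]
          rcases le_or_gt r (1/2) with hra | hra
          · rw [if_pos hra]
            exact L3 r f hr0 hrf hf1 hfa hfb hra
          · rw [if_neg (not_le.2 hra), if_pos (by linarith : r ≤ 2/3)]
            exact L7 r f hr0 hrf hfa hfb hra (by linarith)
        · rw [if_neg (not_lt.2 hfb)]
          rcases le_or_gt r (1/2) with hra | hra
          · rw [if_pos hra]
            exact L5 r f hr0 hrf hfb hra
          · rw [if_neg (not_le.2 hra)]
            rcases le_or_gt r (2/3) with hrb | hrb
            · rw [if_pos hrb]
              exact L9 r f hr0 hrf hfb hra hrb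
            · rw [if_neg (not_le.2 hrb)]
              exact L11 r f hr0 hrf hf1 hrb
    · -- branch B : 1 - r/(2*f)
      rcases lt_or_ge f (1/2) with hfa | hfa
      · rw [if_pos hfa, if_pos (by linarith : r ≤ 1/2)]
        have : r / (2 * f) ≤ 1 := by
          rw [div_le_one (by positivity)]; linarith
        linarith
      · rw [if_neg (not_lt.2 hfa)]
        rcases lt_or_ge f (1 - r/2) with hfb | hfb
        · rw [if_pos hfb]
          rcases le_or_gt r (1/2) with hra | hra
          · rw [if_pos hra]
            exact L4 r f hr0 hrf hf1 hfa hfb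
          · rw [if_neg (not_le.2 hra), if_pos (by linarith : r ≤ 2/3)]
            exact L8 r f hr0 hrf hfa hfb hra (by linarith)
        · rw [if_neg (not_lt.2 hfb)]
          rcases le_or_gt r (1/2) with hra | hra
          · rw [if_pos hra]
            exact L6 r f hr0 hrf hf1 hr1
          · rw [if_neg (not_le.2 hra)]
            rcases le_or_gt r (2/3) with hrb | hrb
            · rw [if_pos hrb]
              exact L10 r f hr0 hrf hf1 hra hrb
            · rw [if_neg (not_le.2 hrb)]
              exact L12 r f hr0 hrf hf1 hrb
  exact le_antisymm (csInf_le ⟨_, hlb⟩ hmem) (le_csInf ⟨_, hmem⟩ hlb)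
end

section
/- Let 0 < r ≤ 1. Define λ(f) = min{2(1−r/f), 1 − r/(2f)} for f > 0, and define λ_{1,2}(f) as follows: if 0 < r < 1/3, λ_{1,2}(f) = 3(1−r) for 0 ≤ f < 2/3, λ_{1,2}(f) = 3 − r/(1−f) for 2/3 ≤ f < 1−r, and λ_{1,2}(f) = 2(1−r)/f for 1−r ≤ f ≤ 1; if 1/3 ≤ r ≤ 1, λ_{1,2}(f) = 3(1−r) for 0 ≤ f < 2/3 and λ_{1,2}(f) = 2(1−r)/f for 2/3 ≤ f ≤ 1. Then the infimum of λ(f) + λ_{1,2}(f) over f ∈ [r, 1] equals 3(1−r) if 0 < r ≤ 2/3, and equals 2(1−r)/r if 2/3 ≤ r ≤ 1. (This is the computation of the joint error exponent d_{1,2}(r) in equation (30) of the paper for the DDF protocol in the multiple access relay channel.) -/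
lemma d_key1 (r f : ℝ) (hr : r ≠ 0) (hf : f ≠ 0) :
    (2 * (1 - r / f) - (2 * (1 - r) / r - 2 * (1 - r) / f)) * (r * f) =
      2 * (f - r) * (2 * r - 1) := by
  field_simp
  ring

lemma d_key2 (r f : ℝ) (hr : r ≠ 0) (hf : f ≠ 0) :
    ((1 - r / (2 * f)) - (2 * (1 - r) / r - 2 * (1 - r) / f)) * (2 * (r * f)) =
      (f - r) * (6 * r - 4) + r * r := by
  field_simp
  ring

set_option maxHeartbeats 1000000 in
/-- Lower bound: for every f ∈ [r,1], the objective is at least the claimed infimum. -/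
lemma d_one_two_lb (r f : ℝ) (hr0 : 0 < r) (hr1 : r ≤ 1) (hrf : r ≤ f) (hf1 : f ≤ 1) :
    (if r ≤ 2 / 3 then 3 * (1 - r) else 2 * (1 - r) / r) ≤
      min (2 * (1 - r / f)) (1 - r / (2 * f)) +
        (if r < 1 / 3 then
          (if f < 2 / 3 then 3 * (1 - r)
           else if f < 1 - r then 3 - r / (1 - f)
           else 2 * (1 - r) / f)
         else
          (if f < 2 / 3 then 3 * (1 - r)
           else 2 * (1 - r) / f)) := by
  have hf0 : 0 < f := lt_of_lt_of_le hr0 hrf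
  have ea : r / f * f = r := div_mul_cancel₀ r hf0.ne'
  have eb : r / (2 * f) * (2 * f) = r := div_mul_cancel₀ r (by positivity)
  have ha0 : 0 ≤ r / f := by positivity
  have hb0 : 0 ≤ r / (2 * f) := by positivity
  -- λ(f) ≥ 0 always
  have hA0 : 0 ≤ 2 * (1 - r / f) := by nlinarith [ea]
  have hB0 : 0 ≤ 1 - r / (2 * f) := by nlinarith [eb]
  rw [← sub_le_iff_le_add, le_min_iff]
  by_cases h1 : r ≤ 2 / 3
  · rw [if_pos h1]
    by_cases h2 : r < 1 / 3
    · rw [if_pos h2]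
      by_cases h3 : f < 2 / 3
      · rw [if_pos h3]
        constructor <;> linarith
      · rw [if_neg h3]
        have hf23 : 2 / 3 ≤ f := not_lt.1 h3
        by_cases h4 : f < 1 - r
        · rw [if_pos h4]
          have h1f : 0 < 1 - f := by linarith
          have hc1 : r / (1 - f) < 1 := by rw [div_lt_one h1f]; linarith
          have hale : r / f ≤ 3 * r / 2 := by nlinarith [ea, ha0]
          have hble : r / (2 * f) ≤ 3 * r / 4 := by nlinarith [eb, hb0]
          constructor <;> linarith
        · rw [if_neg h4]
          have hf1r : 1 - r ≤ f := not_lt.1 h4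
          have ed : 2 * (1 - r) / f * f = 2 * (1 - r) := div_mul_cancel₀ _ hf0.ne'
          constructor
          · nlinarith [ea, ed, mul_nonneg (by linarith : (0:ℝ) ≤ 1 - f)
              (by linarith : (0:ℝ) ≤ 1 - 3 * r)]
          · nlinarith [eb, ed, mul_nonneg (by linarith : (0:ℝ) ≤ 1 - f)
              (by linarith : (0:ℝ) ≤ 4 - 6 * r)]
    · rw [if_neg h2]
      have hr13 : 1 / 3 ≤ r := not_lt.1 h2
      by_cases h3 : f < 2 / 3
      · rw [if_pos h3]
        constructor <;> linarith
      · rw [if_neg h3]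
        have hf23 : 2 / 3 ≤ f := not_lt.1 h3
        have ed : 2 * (1 - r) / f * f = 2 * (1 - r) := div_mul_cancel₀ _ hf0.ne'
        constructor
        · nlinarith [ea, ed, mul_nonneg (by linarith : (0:ℝ) ≤ f - r)
            (by linarith : (0:ℝ) ≤ 3 * r - 1),
            mul_nonneg (by linarith : (0:ℝ) ≤ 2 - 3 * r) (by linarith : (0:ℝ) ≤ 1 - r)]
        · nlinarith [eb, ed, mul_nonneg (by linarith : (0:ℝ) ≤ 1 - f)
            (by linarith : (0:ℝ) ≤ 4 - 6 * r)]
  · rw [if_neg h1]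
    have hr23 : 2 / 3 < r := not_le.1 h1
    have h2 : ¬ r < 1 / 3 := by linarith
    have h3 : ¬ f < 2 / 3 := by push_neg; linarith
    rw [if_neg h2, if_neg h3]
    have hrf2 : 0 < r * f := mul_pos hr0 hf0
    have key1 := d_key1 r f hr0.ne' hf0.ne'
    have key2 := d_key2 r f hr0.ne' hf0.ne'
    have hn1 : (0:ℝ) ≤ 2 * (f - r) * (2 * r - 1) := by nlinarith
    have hn2 : (0:ℝ) ≤ (f - r) * (6 * r - 4) + r * r := by nlinarith
    constructor
    · nlinarith [key1, hn1, hrf2]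
    · nlinarith [key2, hn2, hrf2]

/-- Computation of the joint error exponent d_{1,2}(r) (equation (30)):
the infimum over f ∈ [r,1] of λ(f) + λ_{1,2}(f) for the DDF protocol in the
MAR channel. -/
theorem d_one_two_inf (r : ℝ) (hr0 : 0 < r) (hr1 : r ≤ 1) :
    sInf {y : ℝ | ∃ f : ℝ, r ≤ f ∧ f ≤ 1 ∧
        y = min (2 * (1 - r / f)) (1 - r / (2 * f)) +
          (if r < 1 / 3 then
            (if f < 2 / 3 then 3 * (1 - r)
             else if f < 1 - r then 3 - r / (1 - f)
             else 2 * (1 - r) / f)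
           else
            (if f < 2 / 3 then 3 * (1 - r)
             else 2 * (1 - r) / f))} =
      (if r ≤ 2 / 3 then 3 * (1 - r) else 2 * (1 - r) / r) := by
  have hmem : (if r ≤ 2 / 3 then 3 * (1 - r) else 2 * (1 - r) / r) ∈
      {y : ℝ | ∃ f : ℝ, r ≤ f ∧ f ≤ 1 ∧
        y = min (2 * (1 - r / f)) (1 - r / (2 * f)) +
          (if r < 1 / 3 then
            (if f < 2 / 3 then 3 * (1 - r)
             else if f < 1 - r then 3 - r / (1 - f)
             else 2 * (1 - r) / f)
           else
            (if f < 2 / 3 then 3 * (1 - r)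
             else 2 * (1 - r) / f))} := by
    refine ⟨r, le_refl r, hr1, ?_⟩
    have hrr : r / r = 1 := div_self hr0.ne'
    have hrr2 : r / (2 * r) = 1 / 2 := by rw [mul_comm, ← div_div, hrr]
    rw [hrr, hrr2]
    have hmin : min (2 * (1 - (1:ℝ))) (1 - 1 / 2) = 0 := by norm_num
    rw [hmin, zero_add]
    split_ifs with h1 h2 h3 h4 h5
    all_goals try rfl
    all_goals try linarith
    -- remaining: r ≤ 2/3, ¬ r < 1/3, ¬ r < 2/3, i.e. r = 2/3
    have hr : r = 2 / 3 := le_antisymm h1 (not_lt.1 h5)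
    rw [hr]; norm_num
  apply le_antisymm
  · exact csInf_le ⟨_, fun y ⟨f, hrf, hf1, hy⟩ => hy ▸ d_one_two_lb r f hr0 hr1 hrf hf1⟩ hmem
  · exact le_csInf ⟨_, hmem⟩ (fun y ⟨f, hrf, hf1, hy⟩ => hy ▸ d_one_two_lb r f hr0 hr1 hrf hf1)
end

section
/- Let 0 < r₁ < 2 and 0 ≤ f ≤ 1. Then the infimum of v₁ + v₂ + v₃ + v₄ over all (v₁, v₂, v₃, v₄) ∈ ℝ⁴ with v₁, v₂, v₃, v₄ ≥ 0 satisfying (1+f)·(1−min{v₃, v₄})⁺ + (1−f)·(1−min{v₁, v₂, v₃, v₄})⁺ ≤ r₁/2 equals 4 − r₁/(1−f) if 0 ≤ f < 1−r₁/2, and equals (4−r₁)/(1+f) if 1−r₁/2 ≤ f ≤ 1. (This is the computation of λ_i(f) in equation (81) of the paper, arising from the inferior-user outage region O_i^{2+} of equation (77) in the ARQ-DDF protocol for the cooperative vector multiple access channel.) -/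
/-- Lower bound for the inferior-user outage sum. -/
lemma lambda_inferior_lb (r₁ f v₁ v₂ v₃ v₄ : ℝ) (hr0 : 0 < r₁) (hr2 : r₁ < 2)
    (hf0 : 0 ≤ f) (hf1 : f ≤ 1)
    (h1 : 0 ≤ v₁) (h2 : 0 ≤ v₂) (h3 : 0 ≤ v₃) (h4 : 0 ≤ v₄)
    (hcon : (1 + f) * max (1 - min v₃ v₄) 0 +
          (1 - f) * max (1 - min v₁ (min v₂ (min v₃ v₄))) 0 ≤ r₁ / 2) :
    (if f < 1 - r₁ / 2 then 4 - r₁ / (1 - f) else (4 - r₁) / (1 + f)) ≤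
      v₁ + v₂ + v₃ + v₄ := by
  have h1f : (0:ℝ) < 1 + f := by linarith
  set a := min v₃ v₄ with ha
  set m := min v₁ (min v₂ a) with hm
  have ha3 : a ≤ v₃ := min_le_left _ _
  have ha4 : a ≤ v₄ := min_le_right _ _
  have hm1 : m ≤ v₁ := min_le_left _ _
  have hm2 : m ≤ v₂ := le_trans (min_le_right _ _) (min_le_left _ _)
  have hma : m ≤ a := le_trans (min_le_right _ _) (min_le_right _ _)
  have hm0 : 0 ≤ m := le_min h1 (le_min h2 (le_min h3 h4))
  have hA : 1 - a ≤ max (1 - a) 0 := le_max_left _ _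
  have hM : 1 - m ≤ max (1 - m) 0 := le_max_left _ _
  have hA0 : 0 ≤ max (1 - a) 0 := le_max_right _ _
  have hM0 : 0 ≤ max (1 - m) 0 := le_max_right _ _
  split_ifs with hcase
  · -- f < 1 - r₁/2
    have hfpos : (0:ℝ) < 1 - f := by linarith
    rw [sub_le_iff_le_add, ← sub_le_iff_le_add', le_div_iff₀ hfpos]
    -- (4 - s) * (1 - f) ≤ r₁
    nlinarith [mul_nonneg hf0 hA0, mul_nonneg hfpos.le (sub_nonneg.mpr hA),
      mul_nonneg hfpos.le (sub_nonneg.mpr hM)]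
  · -- f ≥ 1 - r₁/2
    push_neg at hcase
    rw [div_le_iff₀ h1f]
    rcases le_or_gt 1 a with hge | hlt
    · nlinarith [mul_nonneg (by linarith : (0:ℝ) ≤ v₁ + v₂ + v₃ + v₄ - 2) h1f.le]
    · have hAa : max (1 - a) 0 = 1 - a := max_eq_left (by linarith)
      have hMm : max (1 - m) 0 = 1 - m := max_eq_left (by linarith)
      rw [hAa, hMm] at hcon
      nlinarith [mul_nonneg hf0 hm0,
        mul_nonneg (by linarith : (0:ℝ) ≤ v₁ + v₂ + v₃ + v₄ - 2 * a - 2 * m) h1f.le]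

/-- Computation of λ_i(f) (equation (81)): the infimum of
v_ss+v_si+v_is+v_ii over the inferior-user outage region O_i^{2+} of
equation (77) in the ARQ-DDF protocol for the CVMA channel. -/
theorem lambda_inferior_inf (r₁ f : ℝ) (hr0 : 0 < r₁) (hr2 : r₁ < 2)
    (hf0 : 0 ≤ f) (hf1 : f ≤ 1) :
    sInf {s : ℝ | ∃ v₁ v₂ v₃ v₄ : ℝ, 0 ≤ v₁ ∧ 0 ≤ v₂ ∧ 0 ≤ v₃ ∧ 0 ≤ v₄ ∧
        (1 + f) * max (1 - min v₃ v₄) 0 +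
          (1 - f) * max (1 - min v₁ (min v₂ (min v₃ v₄))) 0 ≤ r₁ / 2 ∧
        s = v₁ + v₂ + v₃ + v₄} =
      (if f < 1 - r₁ / 2 then 4 - r₁ / (1 - f) else (4 - r₁) / (1 + f)) := by
  have h1f : (0:ℝ) < 1 + f := by linarith
  set c := (if f < 1 - r₁ / 2 then 4 - r₁ / (1 - f) else (4 - r₁) / (1 + f)) with hc
  have hmem : c ∈ {s : ℝ | ∃ v₁ v₂ v₃ v₄ : ℝ, 0 ≤ v₁ ∧ 0 ≤ v₂ ∧ 0 ≤ v₃ ∧ 0 ≤ v₄ ∧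
        (1 + f) * max (1 - min v₃ v₄) 0 +
          (1 - f) * max (1 - min v₁ (min v₂ (min v₃ v₄))) 0 ≤ r₁ / 2 ∧
        s = v₁ + v₂ + v₃ + v₄} := by
    rw [hc]
    split_ifs with hcase
    · -- f < 1 - r₁/2; use (v, v, 1, 1) with v = 1 - r₁/(2(1-f))
      have hfpos : (0:ℝ) < 1 - f := by linarith
      set v : ℝ := 1 - r₁ / (2 * (1 - f)) with hv
      have hq : 0 < r₁ / (2 * (1 - f)) := div_pos hr0 (by linarith)
      have hq1 : r₁ / (2 * (1 - f)) < 1 := by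
        rw [div_lt_one (by linarith)]; linarith
      have hv0 : 0 ≤ v := by rw [hv]; linarith
      have hv1 : v ≤ 1 := by rw [hv]; linarith
      refine ⟨v, v, 1, 1, hv0, hv0, zero_le_one, zero_le_one, ?_, ?_⟩
      · have e1 : min (1:ℝ) 1 = 1 := min_self 1
        rw [e1]
        have e2 : min v (min v (1:ℝ)) = v := by
          rw [min_eq_left hv1, min_self]
        rw [e2]
        have e3 : max (1 - (1:ℝ)) 0 = 0 := by norm_num
        rw [e3]
        have e4 : max (1 - v) 0 = 1 - v := max_eq_left (by linarith)
        rw [e4, hv]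
        have : (1 - f) * (1 - (1 - r₁ / (2 * (1 - f)))) = r₁ / 2 := by
          field_simp
          ring
        rw [mul_zero, zero_add, this]
      · rw [hv]
        field_simp
        ring
    · -- f ≥ 1 - r₁/2; use (0, 0, w, w) with w = (2 - r₁/2)/(1+f)
      push_neg at hcase
      set w : ℝ := (2 - r₁ / 2) / (1 + f) with hw
      have hw0 : 0 ≤ w := div_nonneg (by linarith) h1f.le
      have hw1 : w ≤ 1 := by
        rw [hw, div_le_one h1f]; linarith
      refine ⟨0, 0, w, w, le_refl 0, le_refl 0, hw0, hw0, ?_, ?_⟩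
      · have e1 : min w w = w := min_self w
        rw [e1]
        have e2 : min (0:ℝ) (min 0 w) = 0 := by
          rw [min_eq_left (le_min (le_refl 0) hw0)]
        rw [e2]
        have e3 : max (1 - (0:ℝ)) 0 = 1 := by norm_num
        rw [e3]
        have e4 : max (1 - w) 0 = 1 - w := max_eq_left (by linarith)
        rw [e4, hw]
        have : (1 + f) * (1 - (2 - r₁ / 2) / (1 + f)) = 1 + f - (2 - r₁ / 2) := by
          field_simp
        rw [this]; linarith
      · rw [hw]
        field_simp
        ring
  apply le_antisymm
  · refine csInf_le ⟨c, ?_⟩ hmem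
    rintro s ⟨v₁, v₂, v₃, v₄, h1, h2, h3, h4, hcon, rfl⟩
    exact lambda_inferior_lb r₁ f v₁ v₂ v₃ v₄ hr0 hr2 hf0 hf1 h1 h2 h3 h4 hcon
  · refine le_csInf ⟨c, hmem⟩ ?_
    rintro s ⟨v₁, v₂, v₃, v₄, h1, h2, h3, h4, hcon, rfl⟩
    exact lambda_inferior_lb r₁ f v₁ v₂ v₃ v₄ hr0 hr2 hf0 hf1 h1 h2 h3 h4 hcon
end

section
/- Let 0 < r₁ ≤ 2. Define λ_i(f) = 4 − r₁/(1−f) for 0 ≤ f < 1−r₁/2 and λ_i(f) = (4−r₁)/(1+f) for 1−r₁/2 ≤ f ≤ 1. Then the infimum of λ_i(f) + 1 − r₁/(2f) over f ∈ [r₁/2, 1] equals 3 − r₁ if 0 < r₁ < 1, and equals 2(4−r₁)/(2+r₁) if 1 ≤ r₁ ≤ 2. (This is the computation of the inferior-user error exponent d_i(r₁) in equation (84) of the paper for the ARQ-DDF protocol in the cooperative vector multiple access channel, where 1 − r₁/(2f) is the minimum exponential order u of the inter-user channel compatible with listening fraction f from equation (83).) -/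
/-- Computation of the inferior-user error exponent d_i(r₁) (equation (84)):
the infimum over f ∈ [r₁/2, 1] of λ_i(f) + (1 − r₁/(2f)) for the ARQ-DDF
protocol in the CVMA channel. -/
theorem d_inferior_inf (r₁ : ℝ) (hr0 : 0 < r₁) (hr2 : r₁ ≤ 2) :
    sInf {y : ℝ | ∃ f : ℝ, r₁ / 2 ≤ f ∧ f ≤ 1 ∧
        y = (if f < 1 - r₁ / 2 then 4 - r₁ / (1 - f) else (4 - r₁) / (1 + f)) +
          1 - r₁ / (2 * f)} =
      (if r₁ < 1 then 3 - r₁ else 2 * (4 - r₁) / (2 + r₁)) := by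
  apply IsLeast.csInf_eq
  constructor
  · -- membership
    by_cases h1 : r₁ < 1
    · rw [if_pos h1]
      refine ⟨1, by linarith, le_refl 1, ?_⟩
      rw [if_neg (by linarith)]
      norm_num
      ring
    · rw [if_neg h1]
      push_neg at h1
      refine ⟨r₁ / 2, le_refl _, by linarith, ?_⟩
      rw [if_neg (by intro h; linarith)]
      have h2 : (2 : ℝ) + r₁ ≠ 0 := by linarith
      have h0 : r₁ ≠ 0 := ne_of_gt hr0
      field_simp
      ring
  · rintro y ⟨f, hf1, hf2, rfl⟩
    have hf0 : 0 < f := by linarith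
    by_cases hbr : f < 1 - r₁ / 2
    · have hr1 : r₁ < 1 := by linarith
      rw [if_pos hbr, if_pos hr1]
      have h1f : 0 < 1 - f := by linarith
      have hd : 0 < 2 * f * (1 - f) := by positivity
      have e : (4 - r₁ / (1 - f) + 1 - r₁ / (2 * f)) - (3 - r₁) =
          ((4 + r₁) * f - 2 * (2 + r₁) * f ^ 2 - r₁) / (2 * f * (1 - f)) := by
        field_simp
        ring
      have hP : 0 ≤ (4 + r₁) * f - 2 * (2 + r₁) * f ^ 2 - r₁ := by
        have t1 : 0 ≤ (1 - r₁ / 2 - f) * (r₁ * ((2 + r₁) * (1 - r₁))) := by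
          apply mul_nonneg (by linarith)
          apply mul_nonneg (by linarith)
          apply mul_nonneg (by linarith) (by linarith)
        have t2 : 0 ≤ (f - r₁ / 2) * (r₁ ^ 2 * (1 - r₁)) := by
          apply mul_nonneg (by linarith)
          apply mul_nonneg (by positivity) (by linarith)
        have t3 : 0 ≤ ((f - r₁ / 2) * (1 - r₁ / 2 - f)) * ((2 + r₁) * (1 - r₁)) := by
          apply mul_nonneg
          · exact mul_nonneg (by linarith) (by linarith)
          · exact mul_nonneg (by linarith) (by linarith)
        nlinarith [t1, t2, t3, sub_pos.2 hr1]
      have := div_nonneg hP (le_of_lt hd)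
      linarith [this, e ▸ this]
    · rw [if_neg hbr]
      push_neg at hbr
      have h1f : 0 < 1 + f := by linarith
      have hd : 0 < 2 * f * (1 + f) := by positivity
      by_cases h1 : r₁ < 1
      · rw [if_pos h1]
        have e : ((4 - r₁) / (1 + f) + 1 - r₁ / (2 * f)) - (3 - r₁) =
            ((4 - r₁) * f + 2 * (r₁ - 2) * f ^ 2 - r₁) / (2 * f * (1 + f)) := by
          field_simp
          ring
        have hP : 0 ≤ (4 - r₁) * f + 2 * (r₁ - 2) * f ^ 2 - r₁ := by
          have t1 : 0 ≤ (1 - f) * (r₁ * ((1 - r₁) * (4 - r₁))) := by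
            apply mul_nonneg (by linarith)
            apply mul_nonneg (by linarith)
            apply mul_nonneg (by linarith) (by linarith)
          have t2 : 0 ≤ ((f - (1 - r₁ / 2)) * (1 - f)) * ((2 - r₁) * r₁) := by
            apply mul_nonneg
            · exact mul_nonneg (by linarith) (by linarith)
            · exact mul_nonneg (by linarith) (by linarith)
          nlinarith [t1, t2, hr0]
        have h := div_nonneg hP (le_of_lt hd)
        linarith [e ▸ h]
      · rw [if_neg h1]
        push_neg at h1
        have h2 : (0:ℝ) < 2 + r₁ := by linarith
        have hd' : 0 < 2 * f * (1 + f) * (2 + r₁) := by positivity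
        have e : ((4 - r₁) / (1 + f) + 1 - r₁ / (2 * f)) - 2 * (4 - r₁) / (2 + r₁) =
            ((6 * r₁ - 12) * f ^ 2 + (4 + 8 * r₁ - 3 * r₁ ^ 2) * f - 2 * r₁ - r₁ ^ 2) /
              (2 * f * (1 + f) * (2 + r₁)) := by
          field_simp
          ring
        have hP : 0 ≤ (6 * r₁ - 12) * f ^ 2 + (4 + 8 * r₁ - 3 * r₁ ^ 2) * f - 2 * r₁ - r₁ ^ 2 := by
          nlinarith [mul_nonneg (by linarith : (0:ℝ) ≤ f - r₁ / 2)
            (by linarith : (0:ℝ) ≤ 1 - f),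
            mul_nonneg (mul_nonneg (by linarith : (0:ℝ) ≤ f - r₁ / 2)
              (by linarith : (0:ℝ) ≤ 1 - f)) (by linarith : (0:ℝ) ≤ 2 - r₁),
            mul_nonneg (mul_nonneg (by linarith : (0:ℝ) ≤ f - r₁ / 2)
              (by linarith : (0:ℝ) ≤ 1 - f)) (by linarith : (0:ℝ) ≤ r₁ - 1),
            mul_nonneg (by linarith : (0:ℝ) ≤ 1 - f) (by linarith : (0:ℝ) ≤ r₁ - 1),
            mul_nonneg (mul_nonneg (by linarith : (0:ℝ) ≤ 1 - f)
              (by linarith : (0:ℝ) ≤ r₁ - 1)) (by linarith : (0:ℝ) ≤ 2 - r₁)]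
        have h := div_nonneg hP (le_of_lt hd')
        linarith [e ▸ h]
end

section
/- Let 0 < r₁ ≤ 2. Consider the infimum of v_ss + v_si + v_is + v_ii + u over all (v_ss, v_si, v_is, v_ii, u) ∈ ℝ⁵ with all coordinates ≥ 0 satisfying: (i) (1 − min{v_is, v_ii})⁺ ≤ r₁/4; (ii) (1 − v_ss − (1−v_is)⁺)⁺ ≤ r₁/2; and (iii) the superiority ordering 1 − v_ss − (1−v_is)⁺ ≥ max{ 1 − v_si − (1−v_ii)⁺, 1 − v_is − (1−v_ss)⁺, 1 − v_ii − (1−v_si)⁺ }. This infimum equals 4 − 2r₁ if 0 < r₁ < 4/3, and equals 2 − r₁/2 if 4/3 ≤ r₁ ≤ 2. (This is the computation of d_{s,ji}(r₁) in equation (102) of the paper, over the outage region O_{s,ji}^{1,2+} of equation (103) intersected with the superiority condition (82).) -/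
/-- Computation of d_{s,ji}(r₁) (equation (102)): the infimum of
v_ss+v_si+v_is+v_ii+u over the outage region O_{s,ji}^{1,2+} of equation (103)
intersected with the superiority condition (82). -/
theorem d_s_ji_inf (r₁ : ℝ) (hr0 : 0 < r₁) (hr2 : r₁ ≤ 2) :
    sInf {s : ℝ | ∃ vss vsi vis vii u : ℝ,
        0 ≤ vss ∧ 0 ≤ vsi ∧ 0 ≤ vis ∧ 0 ≤ vii ∧ 0 ≤ u ∧
        max (1 - min vis vii) 0 ≤ r₁ / 4 ∧
        max (1 - vss - max (1 - vis) 0) 0 ≤ r₁ / 2 ∧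
        1 - vss - max (1 - vis) 0 ≥
          max (1 - vsi - max (1 - vii) 0)
            (max (1 - vis - max (1 - vss) 0) (1 - vii - max (1 - vsi) 0)) ∧
        s = vss + vsi + vis + vii + u} =
      (if r₁ < 4 / 3 then 4 - 2 * r₁ else 2 - r₁ / 2) := by
  set S := {s : ℝ | ∃ vss vsi vis vii u : ℝ,
        0 ≤ vss ∧ 0 ≤ vsi ∧ 0 ≤ vis ∧ 0 ≤ vii ∧ 0 ≤ u ∧
        max (1 - min vis vii) 0 ≤ r₁ / 4 ∧
        max (1 - vss - max (1 - vis) 0) 0 ≤ r₁ / 2 ∧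
        1 - vss - max (1 - vis) 0 ≥
          max (1 - vsi - max (1 - vii) 0)
            (max (1 - vis - max (1 - vss) 0) (1 - vii - max (1 - vsi) 0)) ∧
        s = vss + vsi + vis + vii + u} with hS
  set T : ℝ := if r₁ < 4 / 3 then 4 - 2 * r₁ else 2 - r₁ / 2 with hT
  have hlb : ∀ s ∈ S, T ≤ s := by
    rintro s ⟨vss, vsi, vis, vii, u, h1, h2, h3, h4, h5, hi, hii, hiii, hs⟩
    have hvis : 1 - r₁ / 4 ≤ vis := by
      have ha := le_trans (le_max_left (1 - min vis vii) 0) hi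
      have hb := min_le_left vis vii
      linarith
    have hvii : 1 - r₁ / 4 ≤ vii := by
      have ha := le_trans (le_max_left (1 - min vis vii) 0) hi
      have hb := min_le_right vis vii
      linarith
    have hMis : max (1 - vis) 0 ≤ r₁ / 4 := max_le (by linarith) (by linarith)
    have hMii : max (1 - vii) 0 ≤ r₁ / 4 := max_le (by linarith) (by linarith)
    have h2' : 1 - vss - max (1 - vis) 0 ≤ r₁ / 2 :=
      le_trans (le_max_left _ _) hii
    have h3' : 1 - vsi - max (1 - vii) 0 ≤ 1 - vss - max (1 - vis) 0 :=
      le_trans (le_max_left _ _) hiii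
    by_cases hc : r₁ < 4 / 3
    · rw [hT, if_pos hc]
      linarith
    · rw [hT, if_neg hc]
      linarith
  have hmem : T ∈ S := by
    rw [hS, hT]
    by_cases hc : r₁ < 4 / 3
    · rw [if_pos hc]
      refine ⟨1 - 3 * r₁ / 4, 1 - 3 * r₁ / 4, 1 - r₁ / 4, 1 - r₁ / 4, 0,
        by linarith, by linarith, by linarith, by linarith, le_refl 0, ?_, ?_, ?_, by ring⟩
      · rw [min_self]
        exact max_le (by linarith) (by linarith)
      · have hm : max (1 - (1 - r₁ / 4)) 0 = r₁ / 4 := by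
          rw [max_eq_left (by linarith)]; ring
        rw [hm]
        exact max_le (by linarith) (by linarith)
      · have hm : max (1 - (1 - r₁ / 4)) 0 = r₁ / 4 := by
          rw [max_eq_left (by linarith)]; ring
        have hm2 : max (1 - (1 - 3 * r₁ / 4)) 0 = 3 * r₁ / 4 := by
          rw [max_eq_left (by linarith)]; ring
        rw [hm, hm2, ge_iff_le]
        exact max_le (by linarith) (max_le (by linarith) (by linarith))
    · rw [if_neg hc]
      push_neg at hc
      refine ⟨0, 0, 1 - r₁ / 4, 1 - r₁ / 4, 0,
        le_refl 0, le_refl 0, by linarith, by linarith, le_refl 0, ?_, ?_, ?_, by ring⟩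
      · rw [min_self]
        exact max_le (by linarith) (by linarith)
      · have hm : max (1 - (1 - r₁ / 4)) 0 = r₁ / 4 := by
          rw [max_eq_left (by linarith)]; ring
        rw [hm]
        exact max_le (by linarith) (by linarith)
      · have hm : max (1 - (1 - r₁ / 4)) 0 = r₁ / 4 := by
          rw [max_eq_left (by linarith)]; ring
        have hm2 : max (1 - (0:ℝ)) 0 = 1 := by
          rw [max_eq_left (by linarith)]; ring
        rw [hm, hm2, ge_iff_le]
        exact max_le (by linarith) (max_le (by linarith) (by linarith))
  exact le_antisymm (csInf_le ⟨T, hlb⟩ hmem) (le_csInf ⟨T, hmem⟩ hlb)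
end

section
/- Let 0 < r₁ ≤ 2. Consider the infimum of v_ss + v_si + v_is + v_ii + u over all (v_ss, v_si, v_is, v_ii, u) ∈ ℝ⁵ with all coordinates ≥ 0 satisfying: (i) (1 − min{v_ss, v_si})⁺ ≤ r₁/4; and (ii) the superiority ordering 1 − v_ss − (1−v_is)⁺ ≥ max{ 1 − v_si − (1−v_ii)⁺, 1 − v_is − (1−v_ss)⁺, 1 − v_ii − (1−v_si)⁺ }. This infimum equals 4 − r₁. (This is the computation of d_{s,js}(r₁) in equation (108) of the paper, over the outage region O_{s,js}^{1,2+} of equation (106) intersected with the superiority condition (82).) -/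
/-- Computation of d_{s,js}(r₁) (equation (108)): the infimum of
v_ss+v_si+v_is+v_ii+u over the outage region O_{s,js}^{1,2+} of equation (106)
intersected with the superiority condition (82). -/
theorem d_s_js_inf (r₁ : ℝ) (hr0 : 0 < r₁) (hr2 : r₁ ≤ 2) :
    sInf {s : ℝ | ∃ vss vsi vis vii u : ℝ,
        0 ≤ vss ∧ 0 ≤ vsi ∧ 0 ≤ vis ∧ 0 ≤ vii ∧ 0 ≤ u ∧
        max (1 - min vss vsi) 0 ≤ r₁ / 4 ∧
        1 - vss - max (1 - vis) 0 ≥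
          max (1 - vsi - max (1 - vii) 0)
            (max (1 - vis - max (1 - vss) 0) (1 - vii - max (1 - vsi) 0)) ∧
        s = vss + vsi + vis + vii + u} =
      4 - r₁ := by
  have ha0 : (0:ℝ) ≤ 1 - r₁ / 4 := by linarith
  have lb : ∀ s ∈ {s : ℝ | ∃ vss vsi vis vii u : ℝ,
        0 ≤ vss ∧ 0 ≤ vsi ∧ 0 ≤ vis ∧ 0 ≤ vii ∧ 0 ≤ u ∧
        max (1 - min vss vsi) 0 ≤ r₁ / 4 ∧
        1 - vss - max (1 - vis) 0 ≥
          max (1 - vsi - max (1 - vii) 0)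
            (max (1 - vis - max (1 - vss) 0) (1 - vii - max (1 - vsi) 0)) ∧
        s = vss + vsi + vis + vii + u}, 4 - r₁ ≤ s := by
    rintro s ⟨vss, vsi, vis, vii, u, h1, h2, h3, h4, h5, h6, h7, rfl⟩
    have hvss : 1 - vss ≤ r₁ / 4 := by
      have := le_trans (le_max_left (1 - min vss vsi) 0) h6
      have := min_le_left vss vsi
      linarith
    have hvsi : 1 - vsi ≤ r₁ / 4 := by
      have := le_trans (le_max_left (1 - min vss vsi) 0) h6
      have := min_le_right vss vsi
      linarith
    have h8 : 1 - vss - max (1 - vis) 0 ≥ 1 - vii - max (1 - vsi) 0 :=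
      le_trans (le_trans (le_max_right _ _) (le_max_right _ _)) h7
    rcases le_total (1 - vis) 0 with h | h <;>
    rcases le_total (1 - vsi) 0 with h' | h'
    · rw [max_eq_right h, max_eq_right h'] at h8; linarith
    · rw [max_eq_right h, max_eq_left h'] at h8; linarith
    · rw [max_eq_left h, max_eq_right h'] at h8; linarith
    · rw [max_eq_left h, max_eq_left h'] at h8; linarith
  have mem : (4 - r₁) ∈ {s : ℝ | ∃ vss vsi vis vii u : ℝ,
        0 ≤ vss ∧ 0 ≤ vsi ∧ 0 ≤ vis ∧ 0 ≤ vii ∧ 0 ≤ u ∧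
        max (1 - min vss vsi) 0 ≤ r₁ / 4 ∧
        1 - vss - max (1 - vis) 0 ≥
          max (1 - vsi - max (1 - vii) 0)
            (max (1 - vis - max (1 - vss) 0) (1 - vii - max (1 - vsi) 0)) ∧
        s = vss + vsi + vis + vii + u} := by
    refine ⟨1 - r₁/4, 1 - r₁/4, 1 - r₁/4, 1 - r₁/4, 0, ha0, ha0, ha0, ha0, le_refl 0,
      ?_, ?_, by ring⟩
    · rw [min_self, max_eq_left (by linarith : (0:ℝ) ≤ 1 - (1 - r₁/4))]; linarith
    · rw [max_eq_left (by linarith : (0:ℝ) ≤ 1 - (1 - r₁/4)), max_self]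
      simp
  exact le_antisymm (csInf_le ⟨4 - r₁, lb⟩ mem) (le_csInf ⟨4 - r₁, mem⟩ lb)
end
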